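/- Let $p, q$ be coprime positive integers, $K$ an algebraically closed field of characteristic zero, and $f(X,Y) = X^q \pm Y^p + g(X,Y)$ where every monomial $X^iY^j$ of $g$ satisfies $pi + qj < pq$ (weighted degree lower than $pq$). Then there exists at most one monic element $u \in K((t))$ of order $-p$ (i.e. $u = t^{-p} + \text{higher order terms}$) satisfying $f(u, t^{-q}) = 0$. -/

import Mathlib

open MvPolynomial

namespace BCUnique

open Finset

variable {K : Type*} [CommRing K]

/-- `a` has all coefficients below `A` vanishing. -/
def Below (a : LaurentSeries K) (A : ℤ) : Prop := ∀ j : ℤ, j < A → a.coeff j = 0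

lemma below_mul {a b : LaurentSeries K} {A B : ℤ} (ha : Below a A) (hb : Below b B) :
    Below (a * b) (A + B) := by
  intro j hj
  rw [HahnSeries.coeff_mul]
  refine Finset.sum_eq_zero fun ij hij => ?_
  rw [Finset.mem_addAntidiagonal] at hij
  rcases lt_or_ge ij.1 A with h | h
  · rw [ha _ h, zero_mul]
  · have : ij.2 < B := by have := hij.2.2; omega
    rw [hb _ this, mul_zero]

lemma coeff_mul_boundary {a b : LaurentSeries K} {A B : ℤ} (ha : Below a A) (hb : Below b B) :
    (a * b).coeff (A + B) = a.coeff A * b.coeff B := by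
  rw [HahnSeries.coeff_mul]
  refine Finset.sum_eq_single (A, B) (fun ij hij hne => ?_) (fun h => ?_)
  · rw [Finset.mem_addAntidiagonal] at hij
    obtain ⟨h1, h2, h3⟩ := hij
    rcases lt_or_ge ij.1 A with h | h
    · rw [ha _ h, zero_mul]
    · rcases lt_or_ge ij.2 B with h' | h'
      · rw [hb _ h', mul_zero]
      · exfalso
        exact hne (Prod.ext (by omega) (by omega))
  · show a.coeff A * b.coeff B = 0
    rw [Finset.mem_addAntidiagonal] at h
    simp only [HahnSeries.mem_support, not_and, not_not] at h
    by_cases h1 : a.coeff A = 0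
    · rw [h1, zero_mul]
    · by_cases h2 : b.coeff B = 0
      · rw [h2, mul_zero]
      · exact absurd trivial (h h1 h2)

lemma below_one : Below (1 : LaurentSeries K) 0 := by
  intro j hj
  rw [HahnSeries.coeff_one, if_neg (by omega)]

lemma below_pow {a : LaurentSeries K} {A : ℤ} (ha : Below a A) (n : ℕ) :
    Below (a ^ n) ((n : ℤ) * A) := by
  induction n with
  | zero => simpa using below_one
  | succ n ih =>
      rw [pow_succ, show ((n + 1 : ℕ) : ℤ) * A = (n : ℤ) * A + A from by push_cast; ring]
      exact below_mul ih ha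

lemma coeff_pow_boundary {a : LaurentSeries K} {A : ℤ} (ha : Below a A) (n : ℕ) :
    (a ^ n).coeff ((n : ℤ) * A) = (a.coeff A) ^ n := by
  induction n with
  | zero => simp
  | succ n ih =>
      rw [pow_succ, pow_succ, ← ih,
        show ((n + 1 : ℕ) : ℤ) * A = (n : ℤ) * A + A from by push_cast; ring]
      exact coeff_mul_boundary (below_pow ha n) ha

lemma coeff_sum {ι : Type*} (s : Finset ι) (f : ι → LaurentSeries K) (j : ℤ) :
    (∑ i ∈ s, f i).coeff j = ∑ i ∈ s, (f i).coeff j :=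
  map_sum (HahnSeries.coeff.addMonoidHom j) f s

end BCUnique

open BCUnique Finset

/-- Uniqueness of the monic Laurent-series solution of a Burchnall–Chaundy equation:
if `p, q` are coprime positive integers, `f(X,Y) = X^q ± Y^p + g(X,Y)` with every
monomial of `g` of weighted degree `< pq` (weights `p` for `X`, `q` for `Y`), then
there is at most one monic `u ∈ K((t))` of order `-p` with `f(u, t^{-q}) = 0`. -/
theorem at_most_one_monic_solution (K : Type*) [Field K] [IsAlgClosed K] [CharZero K]
    (p q : ℕ) (hp : 0 < p) (hq : 0 < q) (hpq : Nat.Coprime p q)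
    (ε : K) (hε : ε = 1 ∨ ε = -1)
    (g : MvPolynomial (Fin 2) K)
    (hg : ∀ m ∈ g.support, p * m 0 + q * m 1 < p * q)
    (u₁ u₂ : LaurentSeries K)
    (h₁monic : u₁.coeff (-(p : ℤ)) = 1) (h₁ord : ∀ j : ℤ, j < -(p : ℤ) → u₁.coeff j = 0)
    (h₂monic : u₂.coeff (-(p : ℤ)) = 1) (h₂ord : ∀ j : ℤ, j < -(p : ℤ) → u₂.coeff j = 0)
    (h₁ : aeval ![u₁, (HahnSeries.single (-(q : ℤ)) (1 : K) : LaurentSeries K)]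
        (X 0 ^ q + C ε * X 1 ^ p + g) = 0)
    (h₂ : aeval ![u₂, (HahnSeries.single (-(q : ℤ)) (1 : K) : LaurentSeries K)]
        (X 0 ^ q + C ε * X 1 ^ p + g) = 0) :
    u₁ = u₂ := by
  by_contra hne
  set Y : LaurentSeries K := HahnSeries.single (-(q : ℤ)) (1 : K) with hY
  set w : LaurentSeries K := u₁ - u₂ with hw
  have hwne : w ≠ 0 := sub_ne_zero.mpr hne
  set d : ℤ := w.order with hd
  have hwd : w.coeff d ≠ 0 := fun h => hwne (HahnSeries.coeff_order_eq_zero.mp h)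
  have hbw : Below w d := fun j hj => HahnSeries.coeff_eq_zero_of_lt_order hj
  have hb₁ : Below u₁ (-(p : ℤ)) := h₁ord
  have hb₂ : Below u₂ (-(p : ℤ)) := h₂ord
  have hbY : ∀ n : ℕ, Below (Y ^ n) ((n : ℤ) * (-(q : ℤ))) := by
    intro n j hj
    rw [hY, HahnSeries.single_pow, one_pow]
    refine HahnSeries.coeff_single_of_ne ?_
    rw [nsmul_eq_mul]
    exact hj.ne
  have hdgt : -(p : ℤ) < d := by
    by_contra h
    push_neg at h
    apply hwd
    rcases eq_or_lt_of_le h with h' | h'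
    · rw [h', hw, HahnSeries.coeff_sub, h₁monic, h₂monic, sub_self]
    · rw [hw, HahnSeries.coeff_sub, h₁ord d h', h₂ord d h', sub_self]
  -- geometric sums
  set S : ℕ → LaurentSeries K := fun n => ∑ i ∈ range n, u₁ ^ i * u₂ ^ (n - 1 - i) with hS
  have hgeom : ∀ n : ℕ, u₁ ^ n - u₂ ^ n = S n * w := fun n => (geom_sum₂_mul u₁ u₂ n).symm
  have hcast : ∀ n i : ℕ, i < n →
      ((n : ℤ) - 1) * (-(p : ℤ)) = (i : ℤ) * (-(p : ℤ)) + ((n - 1 - i : ℕ) : ℤ) * (-(p : ℤ)) := by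
    intro n i hi
    have hc : ((n - 1 - i : ℕ) : ℤ) = (n : ℤ) - 1 - i := by omega
    rw [hc]; ring
  have hbS : ∀ n : ℕ, Below (S n) (((n : ℤ) - 1) * (-(p : ℤ))) := by
    intro n j hj
    rw [hS]
    rw [BCUnique.coeff_sum]
    refine Finset.sum_eq_zero fun i hi => ?_
    rw [Finset.mem_range] at hi
    refine below_mul (below_pow hb₁ i) (below_pow hb₂ (n - 1 - i)) j ?_
    rw [← hcast n i hi]
    exact hj
  have hSq : (S q).coeff (((q : ℤ) - 1) * (-(p : ℤ))) = (q : K) := by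
    rw [hS, BCUnique.coeff_sum]
    have hterm : ∀ i ∈ range q,
        (u₁ ^ i * u₂ ^ (q - 1 - i)).coeff (((q : ℤ) - 1) * (-(p : ℤ))) = 1 := by
      intro i hi
      rw [mem_range] at hi
      rw [hcast q i hi, coeff_mul_boundary (below_pow hb₁ i) (below_pow hb₂ (q - 1 - i)),
        coeff_pow_boundary hb₁, coeff_pow_boundary hb₂, h₁monic, h₂monic, one_pow, one_pow,
        one_mul]
    rw [Finset.sum_congr rfl hterm, Finset.sum_const, card_range, nsmul_eq_mul, mul_one]
  -- expand the polynomial equation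
  simp only [map_add, map_mul, map_pow, aeval_X, aeval_C, Matrix.cons_val_zero,
    Matrix.cons_val_one, Matrix.head_cons] at h₁ h₂
  have hgv : ∀ v : LaurentSeries K, aeval ![v, Y] g =
      ∑ m ∈ g.support, algebraMap K (LaurentSeries K) (g.coeff m) * (v ^ m 0 * Y ^ m 1) := by
    intro v
    rw [aeval_def, eval₂_eq']
    refine Finset.sum_congr rfl fun m _ => ?_
    rw [Fin.prod_univ_two]
    simp only [Matrix.cons_val_zero, Matrix.cons_val_one, Matrix.head_cons]
  set N : ℤ := ((q : ℤ) - 1) * (-(p : ℤ)) + d with hN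
  -- the g-part contributes nothing at coefficient N
  have hbC : ∀ c : K, Below (algebraMap K (LaurentSeries K) c) 0 := by
    intro c j hj
    have hCalg : (algebraMap K (LaurentSeries K)) c = HahnSeries.C c := by
      rw [HahnSeries.algebraMap_apply' (Γ := ℤ) (R := K), ← PowerSeries.C_eq_algebraMap,
        HahnSeries.ofPowerSeries_C]
    rw [hCalg, HahnSeries.C_apply, HahnSeries.coeff_single_of_ne hj.ne]
  have hgdiff : ((aeval ![u₁, Y] g) - (aeval ![u₂, Y] g)).coeff N = 0 := by
    rw [hgv u₁, hgv u₂, ← Finset.sum_sub_distrib, BCUnique.coeff_sum]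
    refine Finset.sum_eq_zero fun m hm => ?_
    have hterm : algebraMap K (LaurentSeries K) (g.coeff m) * (u₁ ^ m 0 * Y ^ m 1)
        - algebraMap K (LaurentSeries K) (g.coeff m) * (u₂ ^ m 0 * Y ^ m 1)
        = algebraMap K (LaurentSeries K) (g.coeff m) * ((u₁ ^ m 0 - u₂ ^ m 0) * Y ^ m 1) := by
      ring
    rw [hterm]
    rcases Nat.eq_zero_or_pos (m 0) with h0 | h0
    · simp [h0]
    · rw [hgeom (m 0)]
      have hwt : (p : ℤ) * (m 0 : ℤ) + (q : ℤ) * (m 1 : ℤ) < (p : ℤ) * (q : ℤ) := by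
        exact_mod_cast hg m hm
      have hm0 : (1 : ℤ) ≤ (m 0 : ℤ) := by exact_mod_cast h0
      refine below_mul (hbC _) (below_mul (below_mul (hbS (m 0)) hbw) (hbY (m 1))) N ?_
      rw [hN]
      nlinarith [hwt, hm0, hdgt]
  -- the leading part
  have key : S q * w = -((aeval ![u₁, Y] g) - (aeval ![u₂, Y] g)) := by
    rw [← hgeom q]
    linear_combination h₁ - h₂
  have hmain : (S q * w).coeff N = (q : K) * w.coeff d := by
    rw [hN, coeff_mul_boundary (hbS q) hbw, hSq]
  have hzero : (S q * w).coeff N = 0 := by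
    rw [key, HahnSeries.coeff_neg, hgdiff, neg_zero]
  rw [hmain] at hzero
  rcases mul_eq_zero.mp hzero with h | h
  · exact (Nat.cast_ne_zero.mpr hq.ne') h
  · exact hwd h
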